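/- Let N be a finite set, F = {f_v : 2^{N\{v}} → ℕ | v ∈ N} local scores, and suppose A ⊆ N × N is such that (N,A) is a DAG with Σ_{v∈N} f_v(P_v^A) ≥ t and Mo((N,A)) belongs to a monotone graph class Π' (closed under vertex and edge deletions). Then the arc set A' obtained from A by removing all incoming arcs of every vertex v with f_v(P_v^A) = 0 satisfies: (N,A') is a DAG, Σ_{v∈N} f_v(P_v^{A'}) ≥ t, Mo((N,A')) ∈ Π', and for every v, f_v(P_v^{A'}) = 0 implies P_v^{A'} = ∅. -/

import Mathlib

open scoped Classical

variable {V : Type*}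

/-- The arc relation of an arc set. -/
def arcRel (A : Set (V × V)) : V → V → Prop := fun u v => (u, v) ∈ A

/-- `(N, A)` is a directed acyclic graph: no directed cycles. -/
def IsDAG (A : Set (V × V)) : Prop := ∀ v : V, ¬ Relation.TransGen (arcRel A) v v

/-- Parent set of `v` under arc set `A`. -/
def parents (A : Set (V × V)) (v : V) : Set V := {u | (u, v) ∈ A}

/-- `w` is a descendant of `v`: there is a (nonempty) directed path from `v` to `w`. -/
def Descends (A : Set (V × V)) (v w : V) : Prop := Relation.TransGen (arcRel A) v w

/-- The moralized graph of `(N, A)`: edges between adjacent vertices and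
between vertices with a common child. -/
def Mo (A : Set (V × V)) : SimpleGraph V where
  Adj u v := u ≠ v ∧ ((u, v) ∈ A ∨ (v, u) ∈ A ∨ ∃ w, (u, w) ∈ A ∧ (v, w) ∈ A)
  symm := by
    refine ⟨?_⟩
    intro u v h
    obtain ⟨hne, h⟩ := h
    refine ⟨hne.symm, ?_⟩
    rcases h with h | h | ⟨w, h1, h2⟩
    · exact Or.inr (Or.inl h)
    · exact Or.inl h
    · exact Or.inr (Or.inr ⟨w, h2, h1⟩)
  loopless := ⟨fun v h => h.1 rfl⟩

/-- `S` is a dissociation set of `G`: `G − S` has maximum degree at most one. -/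
def IsDissoc (G : SimpleGraph V) (S : Set V) : Prop :=
  ∀ v ∉ S, {w | w ∉ S ∧ G.Adj v w}.ncard ≤ 1

/-- Removing all incoming arcs of vertices with score `0` preserves being a DAG,
the total score, and membership of the moralized graph in a monotone class, and
afterwards every vertex with score `0` has an empty parent set. -/
theorem stmt_19 [Fintype V] (f : V → Set V → ℕ) (A : Set (V × V)) (t : ℕ)
    (Pi : Set (SimpleGraph V))
    (hmono : ∀ G H : SimpleGraph V, H ≤ G → G ∈ Pi → H ∈ Pi)
    (hdag : IsDAG A) (hscore : t ≤ ∑ v : V, f v (parents A v))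
    (hPi : Mo A ∈ Pi) :
    IsDAG {p ∈ A | f p.2 (parents A p.2) ≠ 0} ∧
    t ≤ ∑ v : V, f v (parents {p ∈ A | f p.2 (parents A p.2) ≠ 0} v) ∧
    Mo {p ∈ A | f p.2 (parents A p.2) ≠ 0} ∈ Pi ∧
    ∀ v : V, f v (parents {p ∈ A | f p.2 (parents A p.2) ≠ 0} v) = 0 →
      parents {p ∈ A | f p.2 (parents A p.2) ≠ 0} v = ∅ := by
  set A' : Set (V × V) := {p ∈ A | f p.2 (parents A p.2) ≠ 0} with hA'
  have hsub : A' ⊆ A := fun p hp => hp.1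
  have hpar : ∀ v : V, parents A' v = if f v (parents A v) = 0 then ∅ else parents A v := by
    intro v
    by_cases h : f v (parents A v) = 0
    · simp only [h, if_pos]
      ext u
      simp only [parents, Set.mem_setOf_eq, hA', Set.mem_empty_iff_false, iff_false]
      rintro ⟨_, hne⟩
      exact hne h
    · simp only [h, if_neg]
      ext u
      simp only [parents, Set.mem_setOf_eq, hA']
      exact ⟨fun h1 => h1.1, fun h1 => ⟨h1, h⟩⟩
  refine ⟨?_, ?_, ?_, ?_⟩
  · intro v hv
    exact hdag v ((fun a b (hab : Relation.TransGen (arcRel A') a b) => show Relation.TransGen (arcRel A) a b by induction hab with | single h => exact .single (hsub h) | tail _ h ih => exact .tail ih (hsub h)) v v hv)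
  · refine hscore.trans (Finset.sum_le_sum fun v _ => ?_)
    rw [hpar v]
    by_cases h : f v (parents A v) = 0
    · simp [h]
    · simp [h]
  · refine hmono (Mo A) (Mo A') ?_ hPi
    intro u v huv
    obtain ⟨hne, h⟩ := huv
    refine ⟨hne, ?_⟩
    rcases h with h | h | ⟨w, h1, h2⟩
    · exact Or.inl (hsub h)
    · exact Or.inr (Or.inl (hsub h))
    · exact Or.inr (Or.inr ⟨w, hsub h1, hsub h2⟩)
  · intro v hv
    rw [hpar v] at hv ⊢
    by_cases h : f v (parents A v) = 0
    · simp [h]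
    · rw [if_neg h] at hv
      exact absurd hv h
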